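/- C-component factorization at the counterfactual level (special case): in the causal model with edges X → W, W → Y, D → Z, Z → Y and latent confounder X ↔ Y, the counterfactual probability P(Y_x = y, X = x', Z_d = z, D = d) equals Σ_w P_{w,z}(Y = y, X = x') · P_x(W = w) · P_d(Z = z) · P(D = d), where P_{a}(·) denotes the distribution under intervention do(a). -/

import Mathlib

open MeasureTheory

/-- C-component factorization at the counterfactual level (special case): in the SCM
with `X = fX(U, U_X)`, `W = fW(X, U_W)`, `D = fD(U_D)`, `Z = fZ(D, U_Z)`,
`Y = fY(W, Z, U, U_Y)` (edges `X → W`, `W → Y`, `D → Z`, `Z → Y`, latent confounder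
`X ↔ Y`), with mutually independent exogenous variables (joint law = product of
marginals) and finite value domains,
`P(Y_x = y, X = x', Z_d = z, D = d)
  = Σ_w P_{w,z}(Y = y, X = x') · P_x(W = w) · P_d(Z = z) · P(D = d)`,
where potential outcomes are defined on the shared exogenous space, e.g.
`Y_x(ω) = fY(fW(x, U_W ω), fZ(fD(U_D ω), U_Z ω), U ω, U_Y ω)`. -/
theorem c_component_factorization_counterfactual
    {Ω : Type*} [MeasurableSpace Ω] (μ : Measure Ω) [IsProbabilityMeasure μ]
    {EU EX EW ED EZ EY XV WV DV ZV YV : Type*}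
    [Fintype WV]
    [MeasurableSpace EU] [MeasurableSpace EX] [MeasurableSpace EW]
    [MeasurableSpace ED] [MeasurableSpace EZ] [MeasurableSpace EY]
    [MeasurableSpace XV] [MeasurableSpace WV] [MeasurableSpace DV]
    [MeasurableSpace ZV] [MeasurableSpace YV]
    [MeasurableSingletonClass XV] [MeasurableSingletonClass WV]
    [MeasurableSingletonClass DV] [MeasurableSingletonClass ZV]
    [MeasurableSingletonClass YV]
    (U : Ω → EU) (UX : Ω → EX) (UW : Ω → EW) (UD : Ω → ED) (UZ : Ω → EZ)
    (UY : Ω → EY)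
    (fX : EU → EX → XV) (fW : XV → EW → WV) (fD : ED → DV) (fZ : DV → EZ → ZV)
    (fY : WV → ZV → EU → EY → YV)
    (hU : Measurable U) (hUX : Measurable UX) (hUW : Measurable UW)
    (hUD : Measurable UD) (hUZ : Measurable UZ) (hUY : Measurable UY)
    (hfX : Measurable fun p : EU × EX => fX p.1 p.2)
    (hfW : Measurable fun p : XV × EW => fW p.1 p.2)
    (hfD : Measurable fD)
    (hfZ : Measurable fun p : DV × EZ => fZ p.1 p.2)
    (hfY : Measurable fun p : WV × ZV × EU × EY => fY p.1 p.2.1 p.2.2.1 p.2.2.2)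
    (hindep : μ.map (fun ω => (U ω, UX ω, UW ω, UD ω, UZ ω, UY ω)) =
      ((μ.map U).prod ((μ.map UX).prod ((μ.map UW).prod
        ((μ.map UD).prod ((μ.map UZ).prod (μ.map UY)))))))
    (x x' : XV) (y : YV) (z : ZV) (d : DV) :
    μ {ω | fY (fW x (UW ω)) (fZ (fD (UD ω)) (UZ ω)) (U ω) (UY ω) = y ∧
        fX (U ω) (UX ω) = x' ∧ fZ d (UZ ω) = z ∧ fD (UD ω) = d}
      = ∑ w : WV,
          μ {ω | fY w z (U ω) (UY ω) = y ∧ fX (U ω) (UX ω) = x'} *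
            μ {ω | fW x (UW ω) = w} *
            μ {ω | fZ d (UZ ω) = z} *
            μ {ω | fD (UD ω) = d} := by
  classical
  -- marginal laws are probability measures (hence s-finite)
  have : IsProbabilityMeasure (μ.map U) := Measure.isProbabilityMeasure_map hU.aemeasurable
  have : IsProbabilityMeasure (μ.map UX) := Measure.isProbabilityMeasure_map hUX.aemeasurable
  have : IsProbabilityMeasure (μ.map UW) := Measure.isProbabilityMeasure_map hUW.aemeasurable
  have : IsProbabilityMeasure (μ.map UD) := Measure.isProbabilityMeasure_map hUD.aemeasurable
  have : IsProbabilityMeasure (μ.map UZ) := Measure.isProbabilityMeasure_map hUZ.aemeasurable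
  have : IsProbabilityMeasure (μ.map UY) := Measure.isProbabilityMeasure_map hUY.aemeasurable
  -- measurability of the slice functions
  have hYm : ∀ w : WV, Measurable fun p : EU × EY => fY w z p.1 p.2 := fun w =>
    hfY.comp ((measurable_const.prodMk (measurable_const.prodMk
      (measurable_fst.prodMk measurable_snd))))
  have hWm : Measurable fun ew : EW => fW x ew :=
    hfW.comp (measurable_const.prodMk measurable_id)
  have hZm : Measurable fun ez : EZ => fZ d ez :=
    hfZ.comp (measurable_const.prodMk measurable_id)
  -- step 1: decompose the LHS event according to the value of W
  have hsplit : {ω | fY (fW x (UW ω)) (fZ (fD (UD ω)) (UZ ω)) (U ω) (UY ω) = y ∧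
        fX (U ω) (UX ω) = x' ∧ fZ d (UZ ω) = z ∧ fD (UD ω) = d}
      = ⋃ w : WV, {ω | fW x (UW ω) = w ∧ fY w z (U ω) (UY ω) = y ∧
          fX (U ω) (UX ω) = x' ∧ fZ d (UZ ω) = z ∧ fD (UD ω) = d} := by
    ext ω
    simp only [Set.mem_setOf_eq, Set.mem_iUnion]
    constructor
    · rintro ⟨h1, h2, h3, h4⟩
      refine ⟨fW x (UW ω), rfl, ?_, h2, h3, h4⟩
      rw [← h3, ← h4]; exact h1
    · rintro ⟨w, hw, h1, h2, h3, h4⟩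
      refine ⟨?_, h2, h3, h4⟩
      rw [hw, h4, h3]; exact h1
  -- measurability of the pieces
  have hEmeas : ∀ w : WV, MeasurableSet {ω | fW x (UW ω) = w ∧ fY w z (U ω) (UY ω) = y ∧
      fX (U ω) (UX ω) = x' ∧ fZ d (UZ ω) = z ∧ fD (UD ω) = d} := by
    intro w
    exact ((hWm.comp hUW) (measurableSet_singleton w)).inter
      ((((hYm w).comp (hU.prodMk hUY)) (measurableSet_singleton y)).inter
        (((hfX.comp (hU.prodMk hUX)) (measurableSet_singleton x')).inter
          (((hZm.comp hUZ) (measurableSet_singleton z)).inter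
            ((hfD.comp hUD) (measurableSet_singleton d)))))
  have hdisj : Pairwise (Function.onFun Disjoint fun w : WV =>
      {ω | fW x (UW ω) = w ∧ fY w z (U ω) (UY ω) = y ∧
        fX (U ω) (UX ω) = x' ∧ fZ d (UZ ω) = z ∧ fD (UD ω) = d}) := by
    intro w w' hne
    refine Set.disjoint_left.2 fun ω hω hω' => hne ?_
    exact hω.1.symm.trans hω'.1
  rw [hsplit, measure_iUnion hdisj hEmeas, tsum_fintype]
  refine Finset.sum_congr rfl fun w _ => ?_
  -- step 2: factorize the joint probability for a fixed w
  set T : Ω → EU × EX × EW × ED × EZ × EY :=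
    fun ω => (U ω, UX ω, UW ω, UD ω, UZ ω, UY ω) with hTdef
  have hT : Measurable T :=
    hU.prodMk (hUX.prodMk (hUW.prodMk (hUD.prodMk (hUZ.prodMk hUY))))
  -- the sliced sets
  set AX : EU → Set EX := fun u => {ex | fX u ex = x'} with hAX
  set AY : EU → Set EY := fun u => {ey | fY w z u ey = y} with hAY
  set BW : Set EW := {ew | fW x ew = w} with hBW
  set CD : Set ED := {ed | fD ed = d} with hCD
  set CZ : Set EZ := {ez | fZ d ez = z} with hCZ
  -- the big sets in the product space
  set S : Set (EU × EX × EW × ED × EZ × EY) :=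
    {p | fW x p.2.2.1 = w ∧ fY w z p.1 p.2.2.2.2.2 = y ∧ fX p.1 p.2.1 = x' ∧
      fZ d p.2.2.2.2.1 = z ∧ fD p.2.2.2.1 = d} with hSdef
  set S' : Set (EU × EX × EW × ED × EZ × EY) :=
    {p | fY w z p.1 p.2.2.2.2.2 = y ∧ fX p.1 p.2.1 = x'} with hS'def
  have hYfull : Measurable fun p : EU × EX × EW × ED × EZ × EY => fY w z p.1 p.2.2.2.2.2 :=
    (hYm w).comp (measurable_fst.prodMk (measurable_snd.comp
      (measurable_snd.comp (measurable_snd.comp (measurable_snd.comp measurable_snd)))))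
  have hSmeas : MeasurableSet S := by
    refine (((hWm.comp ((measurable_fst.comp measurable_snd).comp measurable_snd))
        (measurableSet_singleton w)).inter ?_)
    refine (hYfull (measurableSet_singleton y)).inter ?_
    refine ((hfX.comp (measurable_fst.prodMk (measurable_fst.comp measurable_snd)))
        (measurableSet_singleton x')).inter ?_
    refine ((hZm.comp (measurable_fst.comp (measurable_snd.comp (measurable_snd.comp
        (measurable_snd.comp measurable_snd))))) (measurableSet_singleton z)).inter ?_
    exact (hfD.comp (measurable_fst.comp (measurable_snd.comp
      (measurable_snd.comp measurable_snd)))) (measurableSet_singleton d)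
  have hS'meas : MeasurableSet S' :=
    (hYfull (measurableSet_singleton y)).inter
      ((hfX.comp (measurable_fst.prodMk (measurable_fst.comp measurable_snd)))
        (measurableSet_singleton x'))
  -- transfer to the product measure
  set ρ : Measure (EX × EW × ED × EZ × EY) :=
    (μ.map UX).prod ((μ.map UW).prod ((μ.map UD).prod ((μ.map UZ).prod (μ.map UY)))) with hρ
  have hmapS : μ {ω | fW x (UW ω) = w ∧ fY w z (U ω) (UY ω) = y ∧
      fX (U ω) (UX ω) = x' ∧ fZ d (UZ ω) = z ∧ fD (UD ω) = d}
      = ((μ.map U).prod ρ) S := by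
    rw [hρ, ← hindep, Measure.map_apply hT hSmeas]
    rfl
  have hmapS' : μ {ω | fY w z (U ω) (UY ω) = y ∧ fX (U ω) (UX ω) = x'}
      = ((μ.map U).prod ρ) S' := by
    rw [hρ, ← hindep, Measure.map_apply hT hS'meas]
    rfl
  -- compute slices
  have hsliceS : ∀ u : EU, Prod.mk u ⁻¹' S = AX u ×ˢ (BW ×ˢ (CD ×ˢ (CZ ×ˢ AY u))) := by
    intro u
    ext q
    simp only [Set.mem_preimage, hSdef, Set.mem_setOf_eq, Set.mem_prod, hAX, hAY, hBW, hCD, hCZ]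
    tauto
  have hsliceS' : ∀ u : EU, Prod.mk u ⁻¹' S'
      = AX u ×ˢ ((Set.univ : Set EW) ×ˢ ((Set.univ : Set ED) ×ˢ ((Set.univ : Set EZ) ×ˢ AY u))) := by
    intro u
    ext q
    simp only [Set.mem_preimage, hS'def, Set.mem_setOf_eq, Set.mem_prod, hAX, hAY,
      Set.mem_univ, true_and]
    tauto
  have hρS : ∀ u : EU, ρ (Prod.mk u ⁻¹' S)
      = (μ.map UX) (AX u) * (μ.map UY) (AY u) *
        ((μ.map UW) BW * ((μ.map UD) CD * (μ.map UZ) CZ)) := by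
    intro u
    rw [hsliceS u, hρ, Measure.prod_prod, Measure.prod_prod, Measure.prod_prod,
      Measure.prod_prod]
    ring
  have hρS' : ∀ u : EU, ρ (Prod.mk u ⁻¹' S') = (μ.map UX) (AX u) * (μ.map UY) (AY u) := by
    intro u
    rw [hsliceS' u, hρ, Measure.prod_prod, Measure.prod_prod, Measure.prod_prod,
      Measure.prod_prod, measure_univ, measure_univ, measure_univ]
    ring
  -- measurability of the integrand
  have hAXm : Measurable fun u => (μ.map UX) (AX u) := by
    have : ∀ u, AX u = Prod.mk u ⁻¹' ((fun p : EU × EX => fX p.1 p.2) ⁻¹' {x'}) := fun u => rfl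
    simp only [this]
    exact measurable_measure_prodMk_left (hfX (measurableSet_singleton x'))
  have hAYm : Measurable fun u => (μ.map UY) (AY u) := by
    have : ∀ u, AY u = Prod.mk u ⁻¹' ((fun p : EU × EY => fY w z p.1 p.2) ⁻¹' {y}) :=
      fun u => rfl
    simp only [this]
    exact measurable_measure_prodMk_left ((hYm w) (measurableSet_singleton y))
  -- the marginal events
  have hmapW : μ {ω | fW x (UW ω) = w} = (μ.map UW) BW := by
    exact (Measure.map_apply hUW (hWm (measurableSet_singleton w))).symm
  have hmapZ : μ {ω | fZ d (UZ ω) = z} = (μ.map UZ) CZ := by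
    exact (Measure.map_apply hUZ (hZm (measurableSet_singleton z))).symm
  have hmapD : μ {ω | fD (UD ω) = d} = (μ.map UD) CD := by
    exact (Measure.map_apply hUD (hfD (measurableSet_singleton d))).symm
  -- put everything together
  rw [hmapS, hmapS', hmapW, hmapZ, hmapD, Measure.prod_apply hSmeas,
    Measure.prod_apply hS'meas]
  simp only [hρS, hρS']
  rw [lintegral_mul_const _ (show Measurable fun u => (μ.map UX) (AX u) * (μ.map UY) (AY u) from hAXm.mul hAYm)]
  ring
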